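/- There is a universal constant C such that for all j ≥ 1, L ≥ 1, B ≥ 2, and every z_j, the Rademacher complexity of the class G_{z_j} satisfies (1/B)·Rad_B(G_{z_j}) ≤ C·√(j·L²·log(j·L·B)/B). Consequently, if M ≤ N/2 and B = N−M+j+1, then sup_{z_j}(1/B)·Rad_B(G_{z_j}) ≤ C·√(2·j·L²·log(j·L·N/2)/N). -/

import Mathlib

open MeasureTheory Real Set

set_option maxHeartbeats 1000000

noncomputable section

/-- sign of a boolean coin flip -/
def sgn (b : Bool) : ℝ := if b then 1 else -1

/-- `ℓ` is `L`-Lipschitz in both arguments (on `[0,1]`). -/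
def LossLip (ℓ : ℝ → ℝ → ℝ) (L : ℝ) : Prop :=
  (∀ y ∈ Icc (0:ℝ) 1, ∀ a ∈ Icc (0:ℝ) 1, ∀ b ∈ Icc (0:ℝ) 1, |ℓ a y - ℓ b y| ≤ L * |a - b|) ∧
  (∀ z ∈ Icc (0:ℝ) 1, ∀ a ∈ Icc (0:ℝ) 1, ∀ b ∈ Icc (0:ℝ) 1, |ℓ z a - ℓ z b| ≤ L * |a - b|)

/-- `ℓ` is nonnegative. -/
def LossNonneg (ℓ : ℝ → ℝ → ℝ) : Prop := ∀ a b, 0 ≤ ℓ a b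

/-- The unit interval `[0,1]` as a type. -/
abbrev UI : Type := Set.Icc (0:ℝ) 1

/-- The function `f_{z_j,y^j}` of display (8). -/
def fz {X : Type} (H : Set (X → ℝ)) (ℓ : ℝ → ℝ → ℝ) (L : ℝ) {j m : ℕ}
    (xj : Fin j → X) (xt : Fin m → X) (ε0 : Bool) (εr : Fin m → Bool)
    (y : Fin j → ℝ) (x : X) : ℝ :=
  ⨆ h : H, (2 * L * sgn ε0 * h.1 x + 2 * L * ∑ i, sgn (εr i) * h.1 (xt i) -
    ∑ i, ℓ (h.1 (xj i)) (y i))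

/-- The Rademacher complexity at horizon `B` of the class
`G_{z_j} = {(x,x') ↦ f_{z_j,y^j}(x') − f_{z_j,y^j}(x) : y^j ∈ [0,1]^j}` of functions on
`X × X`. -/
def radG {X : Type} (H : Set (X → ℝ)) (ℓ : ℝ → ℝ → ℝ) (L : ℝ) {j m : ℕ}
    (xj : Fin j → X) (xt : Fin m → X) (ε0 : Bool) (εr : Fin m → Bool) (B : ℕ) : ℝ :=
  ⨆ pts : Fin B → X × X,
    (∑ ε : Fin B → Bool, ⨆ yv : Fin j → UI,
      ∑ i, sgn (ε i) *
        (fz H ℓ L xj xt ε0 εr (fun i' => (yv i' : ℝ)) (pts i).2 -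
          fz H ℓ L xj xt ε0 εr (fun i' => (yv i' : ℝ)) (pts i).1)) / 2 ^ B

lemma massart {B : ℕ} {Q : Type} [Fintype Q] [Nonempty Q] (a : Q → Fin B → ℝ) (c : ℝ)
    (hc : 0 < c) (hB : 1 ≤ B) (hQ : 2 ≤ Fintype.card Q)
    (ha : ∀ q i, |a q i| ≤ c) :
    (∑ ε : Fin B → Bool, ⨆ q, ∑ i, sgn (ε i) * a q i) / 2 ^ B ≤
      c * Real.sqrt (2 * B * Real.log (Fintype.card Q)) := by
  set N : ℝ := (Fintype.card Q : ℝ) with hN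
  have hN2 : (2:ℝ) ≤ N := by rw [hN]; exact_mod_cast hQ
  have hlogN : 0 < Real.log N := Real.log_pos (by linarith)
  have hB0 : (0:ℝ) < B := by exact_mod_cast hB
  set s : ℝ := Real.sqrt (2 * B * Real.log N) with hs
  have hs0 : 0 < s := Real.sqrt_pos.2 (by positivity)
  have hs2 : s ^ 2 = 2 * B * Real.log N := Real.sq_sqrt (by positivity)
  set lam : ℝ := s / (B * c) with hlam
  have hlam0 : 0 < lam := by positivity
  set G : (Fin B → Bool) → ℝ :=
    fun ε => ∑ q, Real.exp (∑ i, lam * (sgn (ε i) * a q i)) with hG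
  have hGpos : ∀ ε, 0 < G ε := fun ε =>
    Finset.sum_pos (fun q _ => Real.exp_pos _) ⟨Classical.arbitrary Q, Finset.mem_univ _⟩
  have step1 : ∀ ε : Fin B → Bool,
      (⨆ q, ∑ i, sgn (ε i) * a q i) ≤ Real.log (G ε) / lam := by
    intro ε
    refine ciSup_le fun q => ?_
    have h1 : Real.exp (∑ i, lam * (sgn (ε i) * a q i)) ≤ G ε :=
      Finset.single_le_sum (f := fun q' => Real.exp (∑ i, lam * (sgn (ε i) * a q' i)))
        (fun q' _ => (Real.exp_pos _).le) (Finset.mem_univ q)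
    have h2 : ∑ i, lam * (sgn (ε i) * a q i) ≤ Real.log (G ε) := by
      have := Real.log_le_log (Real.exp_pos _) h1
      rwa [Real.log_exp] at this
    rw [le_div_iff₀ hlam0]
    calc (∑ i, sgn (ε i) * a q i) * lam = ∑ i, lam * (sgn (ε i) * a q i) := by
          rw [Finset.sum_mul]; exact Finset.sum_congr rfl fun i _ => by ring
      _ ≤ _ := h2
  have h2B : ((2:ℝ))^B ≠ 0 := by positivity
  have hw : ∑ _ε : Fin B → Bool, ((2:ℝ)^B)⁻¹ = 1 := by
    rw [Finset.sum_const, Finset.card_univ, Fintype.card_fun, Fintype.card_bool,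
      Fintype.card_fin, nsmul_eq_mul]
    push_cast
    field_simp
  have amgm := Real.geom_mean_le_arith_mean_weighted Finset.univ
      (fun _ => ((2:ℝ)^B)⁻¹) G (fun _ _ => by positivity) hw (fun ε _ => (hGpos ε).le)
  have step2 : ∑ ε, ((2:ℝ)^B)⁻¹ * Real.log (G ε) ≤ Real.log (∑ ε, ((2:ℝ)^B)⁻¹ * G ε) := by
    have hprod : Real.log (∏ ε, G ε ^ (((2:ℝ)^B)⁻¹)) =
        ∑ ε, ((2:ℝ)^B)⁻¹ * Real.log (G ε) := by
      rw [Real.log_prod (fun ε _ => (Real.rpow_pos_of_pos (hGpos ε) _).ne')]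
      exact Finset.sum_congr rfl fun ε _ => Real.log_rpow (hGpos ε) _
    rw [← hprod]
    exact Real.log_le_log (Finset.prod_pos fun ε _ => Real.rpow_pos_of_pos (hGpos ε) _) amgm
  have step3 : ∑ ε, ((2:ℝ)^B)⁻¹ * G ε ≤ N * Real.exp (lam^2 * (B * c^2) / 2) := by
    have key : ∑ ε : Fin B → Bool, ((2:ℝ)^B)⁻¹ * G ε
        = ∑ q : Q, ∏ i : Fin B,
            ((Real.exp (lam * a q i) + Real.exp (-(lam * a q i))) / 2) := by
      rw [← Finset.mul_sum]
      have e2 : ∑ ε : Fin B → Bool, G ε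
          = ∑ q : Q, ∏ i : Fin B, ∑ b : Bool, Real.exp (lam * (sgn b * a q i)) := by
        simp only [hG, Real.exp_sum]
        rw [Finset.sum_comm]
        exact Finset.sum_congr rfl fun q _ =>
          (Fintype.prod_sum (κ := fun _ : Fin B => Bool)
            (fun i b => Real.exp (lam * (sgn b * a q i)))).symm
      rw [e2, Finset.mul_sum]
      refine Finset.sum_congr rfl fun q _ => ?_
      have e3 : ∀ i : Fin B, ∑ b : Bool, Real.exp (lam * (sgn b * a q i))
          = Real.exp (lam * a q i) + Real.exp (-(lam * a q i)) := by
        intro i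
        rw [Fintype.sum_bool]
        have t1 : sgn true = 1 := rfl
        have t2 : sgn false = -1 := rfl
        rw [t1, t2]
        ring_nf
      simp only [e3]
      rw [Finset.prod_div_distrib, Finset.prod_const, Finset.card_univ, Fintype.card_fin]
      ring
    rw [key]
    calc ∑ q : Q, ∏ i : Fin B, ((Real.exp (lam * a q i) + Real.exp (-(lam * a q i))) / 2)
        ≤ ∑ q : Q, ∏ _i : Fin B, Real.exp (lam^2 * c^2 / 2) := by
          refine Finset.sum_le_sum fun q _ => Finset.prod_le_prod
            (fun i _ => by positivity) (fun i _ => ?_)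
          rw [← Real.cosh_eq]
          refine (Real.cosh_le_exp_half_sq _).trans (Real.exp_le_exp.2 ?_)
          have h1 : (a q i)^2 ≤ c^2 := sq_le_sq' (by linarith [(abs_le.1 (ha q i)).1])
            (by linarith [(abs_le.1 (ha q i)).2])
          have : (lam * a q i)^2 ≤ lam^2 * c^2 := by nlinarith [sq_nonneg lam]
          linarith
      _ = N * Real.exp (lam^2 * (B * c^2) / 2) := by
          rw [Finset.prod_const, Finset.card_univ, Fintype.card_fin, Finset.sum_const,
            Finset.card_univ, nsmul_eq_mul, ← Real.exp_nat_mul]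
          congr 2
          ring
  have hsum_pos : 0 < ∑ ε, ((2:ℝ)^B)⁻¹ * G ε :=
    Finset.sum_pos (fun ε _ => mul_pos (by positivity) (hGpos ε))
      ⟨fun _ => true, Finset.mem_univ _⟩
  have final : (∑ ε : Fin B → Bool, ⨆ q, ∑ i, sgn (ε i) * a q i) / 2 ^ B
      ≤ (1/lam) * (Real.log N + lam^2 * (B * c^2) / 2) := by
    rw [div_eq_mul_inv, mul_comm]
    calc ((2:ℝ)^B)⁻¹ * ∑ ε : Fin B → Bool, ⨆ q, ∑ i, sgn (ε i) * a q i
        = ∑ ε : Fin B → Bool, ((2:ℝ)^B)⁻¹ * ⨆ q, ∑ i, sgn (ε i) * a q i := by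
          rw [Finset.mul_sum]
      _ ≤ ∑ ε : Fin B → Bool, ((2:ℝ)^B)⁻¹ * (Real.log (G ε) / lam) :=
          Finset.sum_le_sum fun ε _ =>
            mul_le_mul_of_nonneg_left (step1 ε) (by positivity)
      _ = (1/lam) * ∑ ε, ((2:ℝ)^B)⁻¹ * Real.log (G ε) := by
          rw [Finset.mul_sum]
          exact Finset.sum_congr rfl fun ε _ => by ring
      _ ≤ (1/lam) * Real.log (∑ ε, ((2:ℝ)^B)⁻¹ * G ε) :=
          mul_le_mul_of_nonneg_left step2 (by positivity)
      _ ≤ (1/lam) * (Real.log N + lam^2 * (B * c^2) / 2) := by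
          refine mul_le_mul_of_nonneg_left ?_ (by positivity)
          calc Real.log (∑ ε, ((2:ℝ)^B)⁻¹ * G ε)
              ≤ Real.log (N * Real.exp (lam^2 * (B * c^2) / 2)) :=
                Real.log_le_log hsum_pos step3
            _ = Real.log N + lam^2 * (B * c^2) / 2 := by
                rw [Real.log_mul (by positivity) (Real.exp_ne_zero _), Real.log_exp]
  refine final.trans (le_of_eq ?_)
  have hlogN' : Real.log N = s^2/(2*(B:ℝ)) := by
    rw [eq_div_iff (by positivity)]; linarith [hs2]
  rw [hlam, hlogN']
  field_simp
  ring

/-- the function inside the supremum defining `fz` -/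
def phiF {X : Type} (H : Set (X → ℝ)) (ℓ : ℝ → ℝ → ℝ) (L : ℝ) {j m : ℕ}
    (xj : Fin j → X) (xt : Fin m → X) (ε0 : Bool) (εr : Fin m → Bool)
    (y : Fin j → ℝ) (x : X) (h : H) : ℝ :=
  2 * L * sgn ε0 * h.1 x + 2 * L * ∑ i, sgn (εr i) * h.1 (xt i) -
    ∑ i, ℓ (h.1 (xj i)) (y i)

lemma fz_eq {X : Type} (H : Set (X → ℝ)) (ℓ : ℝ → ℝ → ℝ) (L : ℝ) {j m : ℕ}
    (xj : Fin j → X) (xt : Fin m → X) (ε0 : Bool) (εr : Fin m → Bool)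
    (y : Fin j → ℝ) (x : X) :
    fz H ℓ L xj xt ε0 εr y x = ⨆ h : H, phiF H ℓ L xj xt ε0 εr y x h := rfl

section fzlemmas

variable {X : Type} {H : Set (X → ℝ)} {ℓ : ℝ → ℝ → ℝ} {L : ℝ} {j m : ℕ}
  {xj : Fin j → X} {xt : Fin m → X} {ε0 : Bool} {εr : Fin m → Bool}

lemma phiF_le (hH : ∀ h ∈ H, ∀ x, h x ∈ Icc (0:ℝ) 1) (hl0 : LossNonneg ℓ)
    (hL : 0 ≤ L) (y : Fin j → ℝ) (x : X) (h : H) :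
    phiF H ℓ L xj xt ε0 εr y x h ≤ 2 * L * (1 + m) := by
  obtain ⟨hx0, hx1⟩ := hH h.1 h.2 x
  have t1 : 2 * L * sgn ε0 * h.1 x ≤ 2 * L := by
    cases ε0 <;> simp only [sgn, if_true, if_false, Bool.false_eq_true] <;> nlinarith
  have t2 : ∑ i, sgn (εr i) * h.1 (xt i) ≤ (m : ℝ) := by
    calc ∑ i, sgn (εr i) * h.1 (xt i) ≤ ∑ _i : Fin m, (1:ℝ) := by
          refine Finset.sum_le_sum fun i _ => ?_
          obtain ⟨h0, h1⟩ := hH h.1 h.2 (xt i)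
          cases εr i <;> simp only [sgn, if_true, if_false, Bool.false_eq_true] <;> nlinarith
      _ = m := by simp
  have t3 : 0 ≤ ∑ i, ℓ (h.1 (xj i)) (y i) := Finset.sum_nonneg fun i _ => hl0 _ _
  have t4 : 2 * L * ∑ i, sgn (εr i) * h.1 (xt i) ≤ 2 * L * m :=
    mul_le_mul_of_nonneg_left t2 (by linarith)
  unfold phiF
  nlinarith

lemma phiF_bdd (hH : ∀ h ∈ H, ∀ x, h x ∈ Icc (0:ℝ) 1) (hl0 : LossNonneg ℓ)
    (hL : 0 ≤ L) (y : Fin j → ℝ) (x : X) :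
    BddAbove (Set.range (phiF H ℓ L xj xt ε0 εr y x)) := by
  refine ⟨2 * L * (1 + m), ?_⟩
  rintro v ⟨h, rfl⟩
  exact phiF_le hH hl0 hL y x h

lemma ciSup_le_ciSup_add {ι : Type} [Nonempty ι] {φ ψ : ι → ℝ}
    (hψ : BddAbove (Set.range ψ)) {c : ℝ} (h : ∀ i, φ i ≤ ψ i + c) :
    (⨆ i, φ i) ≤ (⨆ i, ψ i) + c :=
  ciSup_le fun i => (h i).trans (add_le_add_left (le_ciSup hψ i) c)

lemma fz_sub_x_le (hH : ∀ h ∈ H, ∀ x, h x ∈ Icc (0:ℝ) 1) (hne : H.Nonempty)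
    (hl0 : LossNonneg ℓ) (hL : 0 ≤ L) (y : Fin j → ℝ) (x x' : X) :
    fz H ℓ L xj xt ε0 εr y x' - fz H ℓ L xj xt ε0 εr y x ≤ 2 * L := by
  haveI := hne.to_subtype
  rw [sub_le_iff_le_add, fz_eq, fz_eq, add_comm]
  refine ciSup_le_ciSup_add (phiF_bdd hH hl0 hL y x) fun h => ?_
  obtain ⟨h0, h1⟩ := hH h.1 h.2 x
  obtain ⟨h0', h1'⟩ := hH h.1 h.2 x'
  unfold phiF
  cases ε0 <;> simp only [sgn, if_true, if_false, Bool.false_eq_true] <;> nlinarith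

lemma fz_sub_x_abs (hH : ∀ h ∈ H, ∀ x, h x ∈ Icc (0:ℝ) 1) (hne : H.Nonempty)
    (hl0 : LossNonneg ℓ) (hL : 0 ≤ L) (y : Fin j → ℝ) (x x' : X) :
    |fz H ℓ L xj xt ε0 εr y x' - fz H ℓ L xj xt ε0 εr y x| ≤ 2 * L :=
  abs_sub_le_iff.2 ⟨fz_sub_x_le hH hne hl0 hL y x x',
    fz_sub_x_le hH hne hl0 hL y x' x⟩

lemma fz_sub_y_le (hH : ∀ h ∈ H, ∀ x, h x ∈ Icc (0:ℝ) 1) (hne : H.Nonempty)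
    (hlip : LossLip ℓ L) (hl0 : LossNonneg ℓ) (hL : 0 ≤ L)
    {y y' : Fin j → ℝ} (hy : ∀ i, y i ∈ Icc (0:ℝ) 1) (hy' : ∀ i, y' i ∈ Icc (0:ℝ) 1)
    (x : X) :
    fz H ℓ L xj xt ε0 εr y x - fz H ℓ L xj xt ε0 εr y' x ≤ L * ∑ i, |y i - y' i| := by
  haveI := hne.to_subtype
  rw [sub_le_iff_le_add, fz_eq, fz_eq, add_comm]
  refine ciSup_le_ciSup_add (phiF_bdd hH hl0 hL y' x) fun h => ?_
  unfold phiF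
  have key : ∑ i, ℓ (h.1 (xj i)) (y' i) - ∑ i, ℓ (h.1 (xj i)) (y i)
      ≤ L * ∑ i, |y i - y' i| := by
    rw [← Finset.sum_sub_distrib, Finset.mul_sum]
    refine Finset.sum_le_sum fun i _ => ?_
    have hb := hlip.2 (h.1 (xj i)) (hH h.1 h.2 (xj i)) (y' i) (hy' i) (y i) (hy i)
    calc ℓ (h.1 (xj i)) (y' i) - ℓ (h.1 (xj i)) (y i)
        ≤ |ℓ (h.1 (xj i)) (y' i) - ℓ (h.1 (xj i)) (y i)| := le_abs_self _
      _ ≤ L * |y' i - y i| := hb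
      _ = L * |y i - y' i| := by rw [abs_sub_comm]
  linarith

lemma fz_sub_y_abs (hH : ∀ h ∈ H, ∀ x, h x ∈ Icc (0:ℝ) 1) (hne : H.Nonempty)
    (hlip : LossLip ℓ L) (hl0 : LossNonneg ℓ) (hL : 0 ≤ L)
    {y y' : Fin j → ℝ} (hy : ∀ i, y i ∈ Icc (0:ℝ) 1) (hy' : ∀ i, y' i ∈ Icc (0:ℝ) 1)
    (x : X) :
    |fz H ℓ L xj xt ε0 εr y x - fz H ℓ L xj xt ε0 εr y' x| ≤ L * ∑ i, |y i - y' i| := by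
  refine abs_sub_le_iff.2 ⟨fz_sub_y_le hH hne hlip hl0 hL hy hy' x, ?_⟩
  have : fz H ℓ L xj xt ε0 εr y' x - fz H ℓ L xj xt ε0 εr y x ≤ L * ∑ i, |y' i - y i| :=
    fz_sub_y_le hH hne hlip hl0 hL hy' hy x
  have e : ∑ i, |y' i - y i| = ∑ i, |y i - y' i| :=
    Finset.sum_congr rfl fun i _ => abs_sub_comm _ _
  linarith [e ▸ this]

end fzlemmas

lemma sgn_mul_le_abs (b : Bool) (t : ℝ) : sgn b * t ≤ |t| := by
  cases b
  · simp only [sgn, Bool.false_eq_true, if_false, neg_one_mul]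
    linarith [neg_abs_le t]
  · simp only [sgn, if_true, one_mul]
    exact le_abs_self t

lemma part1 {X : Type} (H : Set (X → ℝ)) (ℓ : ℝ → ℝ → ℝ) (L : ℝ) (j m B : ℕ)
    (hH : ∀ h ∈ H, ∀ x, h x ∈ Icc (0:ℝ) 1) (hne : H.Nonempty)
    (hlip : LossLip ℓ L) (hl0 : LossNonneg ℓ) (hL : 1 ≤ L) (hj : 1 ≤ j) (hB : 2 ≤ B)
    (xj : Fin j → X) (xt : Fin m → X) (ε0 : Bool) (εr : Fin m → Bool) :
    (1 / (B : ℝ)) * radG H ℓ L xj xt ε0 εr B ≤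
      7 * Real.sqrt ((j : ℝ) * L ^ 2 * Real.log ((j : ℝ) * L * B) / B) := by
  haveI := hne.to_subtype
  haveI : Nonempty UI := ⟨⟨0, by constructor <;> norm_num⟩⟩
  have hL0 : (0:ℝ) ≤ L := by linarith
  have hB0 : (0:ℝ) < B := by exact_mod_cast Nat.lt_of_lt_of_le Nat.zero_lt_two hB
  have hB2 : (2:ℝ) ≤ B := by exact_mod_cast hB
  have hj1 : (1:ℝ) ≤ j := by exact_mod_cast hj
  have hjL1 : (1:ℝ) ≤ (j:ℝ) * L := by
    nlinarith [mul_le_mul hj1 hL (by norm_num : (0:ℝ) ≤ 1) (by linarith : (0:ℝ) ≤ (j:ℝ))]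
  have hjLB2 : (2:ℝ) ≤ (j:ℝ) * L * B := by
    nlinarith [mul_le_mul hjL1 hB2 (by norm_num : (0:ℝ) ≤ 2) (by linarith : (0:ℝ) ≤ (j:ℝ) * L)]
  have hlogpos : 0 < Real.log ((j:ℝ) * L * B) := Real.log_pos (by linarith)
  have hlog2le : Real.log 2 ≤ Real.log ((j:ℝ) * L * B) :=
    Real.log_le_log (by norm_num) hjLB2
  have hlog_half : (1/2 : ℝ) ≤ Real.log ((j:ℝ) * L * B) := by
    have := Real.log_two_gt_d9
    linarith
  set T : ℝ := (j : ℝ) * L ^ 2 * Real.log ((j : ℝ) * L * B) / B with hT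
  have hT0 : 0 < T := by
    apply div_pos _ hB0
    have h1 : (0:ℝ) < (j:ℝ) * L ^ 2 := by positivity
    nlinarith
  set K : ℕ := j * B * ⌈L⌉₊ with hKdef
  have hceil1 : 1 ≤ ⌈L⌉₊ := Nat.one_le_ceil_iff.2 (by linarith)
  have hceilL : L ≤ (⌈L⌉₊ : ℝ) := Nat.le_ceil L
  have hceil2L : (⌈L⌉₊ : ℝ) ≤ 2 * L := by
    have := Nat.ceil_lt_add_one hL0
    linarith
  have hKr : (K : ℝ) = (j : ℝ) * B * (⌈L⌉₊ : ℝ) := by rw [hKdef]; push_cast; ring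
  have hK_ge : (j:ℝ) * L * B ≤ (K : ℝ) := by rw [hKr]; nlinarith
  have hK2 : (2:ℝ) ≤ (K:ℝ) := le_trans hjLB2 hK_ge
  have hK0 : (0:ℝ) < K := by linarith
  have hKp1 : (K : ℝ) + 1 ≤ 4 * ((j:ℝ) * L * B) := by
    rw [hKr]; nlinarith
  have hlogK : Real.log ((K:ℝ) + 1) ≤ 3 * Real.log ((j:ℝ) * L * B) := by
    have h1 : Real.log ((K:ℝ) + 1) ≤ Real.log (4 * ((j:ℝ) * L * B)) :=
      Real.log_le_log (by linarith) hKp1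
    have h2 : Real.log (4 * ((j:ℝ) * L * B)) =
        Real.log 4 + Real.log ((j:ℝ) * L * B) :=
      Real.log_mul (by norm_num) (by linarith)
    have h3 : Real.log 4 = 2 * Real.log 2 := by
      rw [show (4:ℝ) = 2 ^ (2:ℕ) by norm_num, Real.log_pow]
      push_cast; ring
    linarith
  have hlogK0 : 0 < Real.log ((K:ℝ) + 1) := Real.log_pos (by linarith)
  haveI : Nonempty (Fin (K + 1)) := ⟨0⟩
  set Gm : (Fin j → Fin (K + 1)) → (Fin j → ℝ) := fun q i' => (q i' : ℝ) / K with hGm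
  have hGmem : ∀ q i', Gm q i' ∈ Icc (0:ℝ) 1 := by
    intro q i'
    constructor
    · positivity
    · rw [div_le_one hK0]
      have h1 : (q i' : ℕ) ≤ K := Nat.lt_succ_iff.1 (q i').2
      exact_mod_cast h1
  have cardQ : (Fintype.card (Fin j → Fin (K + 1)) : ℝ) = ((K:ℝ) + 1) ^ j := by
    rw [Fintype.card_fun, Fintype.card_fin, Fintype.card_fin]
    push_cast; ring
  have hQ2 : 2 ≤ Fintype.card (Fin j → Fin (K + 1)) := by
    rw [Fintype.card_fun, Fintype.card_fin, Fintype.card_fin]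
    calc 2 ≤ K + 1 := by
          have h1 : (2:ℕ) ≤ K := by exact_mod_cast hK2
          omega
      _ ≤ (K + 1) ^ j := Nat.le_self_pow (by omega) _
  set A : ℝ := 2 * B * ((j:ℝ) * Real.log ((K:ℝ) + 1)) with hA
  have hA0 : 0 ≤ A := by rw [hA]; positivity
  have hrad : radG H ℓ L xj xt ε0 εr B ≤ 2 * L * Real.sqrt A + 2 := by
    unfold radG
    refine Real.iSup_le (fun pts => ?_) (by positivity)
    set a : (Fin j → Fin (K+1)) → Fin B → ℝ :=
      fun q i => fz H ℓ L xj xt ε0 εr (Gm q) (pts i).2 -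
        fz H ℓ L xj xt ε0 εr (Gm q) (pts i).1 with ha
    have habs : ∀ q i, |a q i| ≤ 2 * L := fun q i =>
      fz_sub_x_abs hH hne hl0 hL0 (Gm q) (pts i).1 (pts i).2
    have hmas := massart a (2 * L) (by linarith) (by omega) hQ2 habs
    have claim : ∀ ε : Fin B → Bool,
        (⨆ yv : Fin j → UI, ∑ i, sgn (ε i) *
          (fz H ℓ L xj xt ε0 εr (fun i' => (yv i' : ℝ)) (pts i).2 -
            fz H ℓ L xj xt ε0 εr (fun i' => (yv i' : ℝ)) (pts i).1))
        ≤ (⨆ q, ∑ i, sgn (ε i) * a q i) + 2 := by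
      intro ε
      refine ciSup_le fun yv => ?_
      have hqlt : ∀ i' : Fin j, ⌊(yv i' : ℝ) * K⌋₊ < K + 1 := by
        intro i'
        have hy0 : (0:ℝ) ≤ (yv i' : ℝ) := (yv i').2.1
        have h1 : ((yv i' : ℝ)) * K ≤ K := by
          have := (yv i').2.2
          nlinarith
        have h2 : (⌊(yv i' : ℝ) * K⌋₊ : ℝ) ≤ K :=
          le_trans (Nat.floor_le (by positivity)) h1
        have h3 : ⌊(yv i' : ℝ) * K⌋₊ ≤ K := by exact_mod_cast h2
        omega
      set q : Fin j → Fin (K+1) := fun i' => ⟨⌊(yv i' : ℝ) * K⌋₊, hqlt i'⟩ with hq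
      have happrox : ∀ i', |(yv i' : ℝ) - Gm q i'| ≤ 1 / K := by
        intro i'
        have hy0 : (0:ℝ) ≤ (yv i' : ℝ) := (yv i').2.1
        have hfl : (⌊(yv i' : ℝ) * K⌋₊ : ℝ) ≤ (yv i' : ℝ) * K :=
          Nat.floor_le (by positivity)
        have hfl2 : (yv i' : ℝ) * K < (⌊(yv i' : ℝ) * K⌋₊ : ℝ) + 1 :=
          Nat.lt_floor_add_one _
        have hGmq : Gm q i' = (⌊(yv i' : ℝ) * K⌋₊ : ℝ) / K := rfl
        have hlow : (⌊(yv i' : ℝ) * K⌋₊ : ℝ) / K ≤ (yv i' : ℝ) := by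
          rw [div_le_iff₀ hK0]; exact hfl
        have hup : (yv i' : ℝ) ≤ (⌊(yv i' : ℝ) * K⌋₊ : ℝ) / K + 1 / K := by
          rw [← add_div, le_div_iff₀ hK0]; linarith
        have h1K : (0:ℝ) < 1 / K := by positivity
        rw [hGmq, abs_le]
        constructor <;> [linarith; linarith]
      have hdiffsum : ∑ i', |(yv i' : ℝ) - Gm q i'| ≤ (j:ℝ) / K := by
        calc ∑ i', |(yv i' : ℝ) - Gm q i'| ≤ ∑ _i' : Fin j, 1/(K:ℝ) :=
              Finset.sum_le_sum fun i' _ => happrox i'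
          _ = (j:ℝ)/K := by
              rw [Finset.sum_const, Finset.card_univ, Fintype.card_fin, nsmul_eq_mul]
              ring
      have hterm : ∀ i : Fin B, sgn (ε i) *
          (fz H ℓ L xj xt ε0 εr (fun i' => (yv i' : ℝ)) (pts i).2 -
            fz H ℓ L xj xt ε0 εr (fun i' => (yv i' : ℝ)) (pts i).1)
          ≤ sgn (ε i) * a q i + 2 * (L * ((j:ℝ)/K)) := by
        intro i
        have hd2 : |fz H ℓ L xj xt ε0 εr (fun i' => (yv i' : ℝ)) (pts i).2 -
            fz H ℓ L xj xt ε0 εr (Gm q) (pts i).2|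
            ≤ L * ∑ i', |(yv i' : ℝ) - Gm q i'| :=
          fz_sub_y_abs hH hne hlip hl0 hL0 (fun i' => (yv i').2)
            (fun i' => hGmem q i') (pts i).2
        have hd1 : |fz H ℓ L xj xt ε0 εr (fun i' => (yv i' : ℝ)) (pts i).1 -
            fz H ℓ L xj xt ε0 εr (Gm q) (pts i).1|
            ≤ L * ∑ i', |(yv i' : ℝ) - Gm q i'| :=
          fz_sub_y_abs hH hne hlip hl0 hL0 (fun i' => (yv i').2)
            (fun i' => hGmem q i') (pts i).1
        have hsl : L * ∑ i', |(yv i' : ℝ) - Gm q i'| ≤ L * ((j:ℝ)/K) :=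
          mul_le_mul_of_nonneg_left hdiffsum hL0
        have hdiff : ((fz H ℓ L xj xt ε0 εr (fun i' => (yv i' : ℝ)) (pts i).2 -
            fz H ℓ L xj xt ε0 εr (fun i' => (yv i' : ℝ)) (pts i).1) - a q i)
            ≤ 2 * (L * ((j:ℝ)/K)) := by
          rw [ha]
          have := (abs_le.1 hd2).2
          have := (abs_le.1 hd1).1
          simp only []
          linarith [(abs_le.1 hd2).2, (abs_le.1 hd1).1]
        have hdiff' : -(2 * (L * ((j:ℝ)/K))) ≤
            ((fz H ℓ L xj xt ε0 εr (fun i' => (yv i' : ℝ)) (pts i).2 -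
            fz H ℓ L xj xt ε0 εr (fun i' => (yv i' : ℝ)) (pts i).1) - a q i) := by
          rw [ha]
          simp only []
          linarith [(abs_le.1 hd2).1, (abs_le.1 hd1).2]
        have habs2 : |(fz H ℓ L xj xt ε0 εr (fun i' => (yv i' : ℝ)) (pts i).2 -
            fz H ℓ L xj xt ε0 εr (fun i' => (yv i' : ℝ)) (pts i).1) - a q i|
            ≤ 2 * (L * ((j:ℝ)/K)) := abs_le.2 ⟨hdiff', hdiff⟩
        have hsgn := sgn_mul_le_abs (ε i)
          ((fz H ℓ L xj xt ε0 εr (fun i' => (yv i' : ℝ)) (pts i).2 -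
            fz H ℓ L xj xt ε0 εr (fun i' => (yv i' : ℝ)) (pts i).1) - a q i)
        have hexp : sgn (ε i) * ((fz H ℓ L xj xt ε0 εr (fun i' => (yv i' : ℝ)) (pts i).2 -
            fz H ℓ L xj xt ε0 εr (fun i' => (yv i' : ℝ)) (pts i).1) - a q i)
            = sgn (ε i) * (fz H ℓ L xj xt ε0 εr (fun i' => (yv i' : ℝ)) (pts i).2 -
              fz H ℓ L xj xt ε0 εr (fun i' => (yv i' : ℝ)) (pts i).1)
              - sgn (ε i) * a q i := by ring
        calc sgn (ε i) * (fz H ℓ L xj xt ε0 εr (fun i' => (yv i' : ℝ)) (pts i).2 -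
              fz H ℓ L xj xt ε0 εr (fun i' => (yv i' : ℝ)) (pts i).1)
            = sgn (ε i) * a q i + sgn (ε i) *
                ((fz H ℓ L xj xt ε0 εr (fun i' => (yv i' : ℝ)) (pts i).2 -
                  fz H ℓ L xj xt ε0 εr (fun i' => (yv i' : ℝ)) (pts i).1) - a q i) := by
              ring
          _ ≤ sgn (ε i) * a q i +
                |(fz H ℓ L xj xt ε0 εr (fun i' => (yv i' : ℝ)) (pts i).2 -
                  fz H ℓ L xj xt ε0 εr (fun i' => (yv i' : ℝ)) (pts i).1) - a q i| :=
              add_le_add_right hsgn _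
          _ ≤ sgn (ε i) * a q i + 2 * (L * ((j:ℝ)/K)) := add_le_add_right habs2 _
      have hKjB : (B:ℝ) * (2 * (L * ((j:ℝ)/K))) ≤ 2 := by
        have e : (B:ℝ) * (2 * (L * ((j:ℝ)/K))) = 2 * ((j:ℝ) * L * B) / K := by
          field_simp
        rw [e, div_le_iff₀ hK0]
        linarith [hK_ge]
      have hbdd : BddAbove (Set.range fun q' => ∑ i, sgn (ε i) * a q' i) :=
        Set.Finite.bddAbove (Set.finite_range _)
      calc ∑ i, sgn (ε i) *
          (fz H ℓ L xj xt ε0 εr (fun i' => (yv i' : ℝ)) (pts i).2 -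
            fz H ℓ L xj xt ε0 εr (fun i' => (yv i' : ℝ)) (pts i).1)
          ≤ ∑ i, (sgn (ε i) * a q i + 2 * (L * ((j:ℝ)/K))) :=
            Finset.sum_le_sum fun i _ => hterm i
        _ = (∑ i, sgn (ε i) * a q i) + B * (2 * (L * ((j:ℝ)/K))) := by
            rw [Finset.sum_add_distrib, Finset.sum_const, Finset.card_univ,
              Fintype.card_fin, nsmul_eq_mul]
        _ ≤ (∑ i, sgn (ε i) * a q i) + 2 := by linarith
        _ ≤ (⨆ q', ∑ i, sgn (ε i) * a q' i) + 2 := by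
            linarith [le_ciSup hbdd q]
    calc (∑ ε : Fin B → Bool, ⨆ yv : Fin j → UI, ∑ i, sgn (ε i) *
          (fz H ℓ L xj xt ε0 εr (fun i' => (yv i' : ℝ)) (pts i).2 -
            fz H ℓ L xj xt ε0 εr (fun i' => (yv i' : ℝ)) (pts i).1)) / 2 ^ B
        ≤ (∑ ε : Fin B → Bool, ((⨆ q, ∑ i, sgn (ε i) * a q i) + 2)) / 2 ^ B := by
          apply div_le_div_of_nonneg_right (Finset.sum_le_sum fun ε _ => claim ε)
          positivity
      _ = (∑ ε : Fin B → Bool, ⨆ q, ∑ i, sgn (ε i) * a q i) / 2 ^ B + 2 := by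
          rw [Finset.sum_add_distrib, add_div, Finset.sum_const, Finset.card_univ,
            Fintype.card_fun, Fintype.card_bool, Fintype.card_fin, nsmul_eq_mul]
          congr 1
          push_cast
          field_simp
      _ ≤ 2 * L * Real.sqrt (2 * B * Real.log (Fintype.card (Fin j → Fin (K+1)))) + 2 := by
          linarith [hmas]
      _ = 2 * L * Real.sqrt A + 2 := by
          rw [cardQ, Real.log_pow, hA]
  have piece1 : 2 * L * Real.sqrt A / B ≤ 5 * Real.sqrt T := by
    have hlhs0 : 0 ≤ 2 * L * Real.sqrt A / B := by positivity
    have hsq : (2 * L * Real.sqrt A / B)^2 ≤ 25 * T := by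
      have e : (2 * L * Real.sqrt A / B)^2 = 4 * L^2 * A / (B:ℝ)^2 := by
        rw [div_pow, mul_pow, mul_pow, Real.sq_sqrt hA0]; ring
      rw [e, hA, hT, show (25:ℝ) * ((j:ℝ) * L^2 * Real.log ((j:ℝ)*L*B) / B)
        = 25 * ((j:ℝ) * L^2 * Real.log ((j:ℝ)*L*B)) / B from by ring,
        div_le_div_iff₀ (by positivity) hB0]
      have hh1 : 8 * (j:ℝ) * L^2 * (B:ℝ)^2 * Real.log ((K:ℝ)+1)
          ≤ 24 * (j:ℝ) * L^2 * (B:ℝ)^2 * Real.log ((j:ℝ)*L*B) := by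
        have h0 : (0:ℝ) ≤ 8 * (j:ℝ) * L^2 * (B:ℝ)^2 := by positivity
        nlinarith [mul_le_mul_of_nonneg_left hlogK h0]
      have hh2 : (0:ℝ) ≤ (j:ℝ) * L^2 * (B:ℝ)^2 * Real.log ((j:ℝ)*L*B) := by
        have := hlogpos.le
        positivity
      nlinarith [hh1, hh2]
    calc 2 * L * Real.sqrt A / B = Real.sqrt ((2 * L * Real.sqrt A / B)^2) :=
          (Real.sqrt_sq hlhs0).symm
      _ ≤ Real.sqrt (25 * T) := Real.sqrt_le_sqrt hsq
      _ = 5 * Real.sqrt T := by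
          rw [show (25:ℝ) * T = 5^2 * T from by ring, Real.sqrt_mul (by positivity) T,
            Real.sqrt_sq (by norm_num)]
  have hsqrtT : 1/(B:ℝ) ≤ Real.sqrt T := by
    rw [show (1/(B:ℝ)) = Real.sqrt ((1/(B:ℝ))^2) from (Real.sqrt_sq (by positivity)).symm]
    apply Real.sqrt_le_sqrt
    rw [hT, div_pow, one_pow, div_le_div_iff₀ (by positivity) hB0]
    have hL2 : (1:ℝ) ≤ L^2 := by nlinarith
    have h1 : (1:ℝ) ≤ (j:ℝ) * L^2 := by
      nlinarith [mul_le_mul hj1 hL2 (by norm_num : (0:ℝ) ≤ 1) (by linarith : (0:ℝ) ≤ (j:ℝ))]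
    have h2 : (1:ℝ) * (1/2) ≤ ((j:ℝ) * L^2) * Real.log ((j:ℝ) * L * B) :=
      mul_le_mul h1 hlog_half (by norm_num) (by linarith)
    nlinarith [h2, mul_nonneg hB0.le (sub_nonneg.2 hB2), sq_nonneg (B:ℝ), hB0]
  calc (1 / (B:ℝ)) * radG H ℓ L xj xt ε0 εr B
      ≤ (1 / (B:ℝ)) * (2 * L * Real.sqrt A + 2) := by
        apply mul_le_mul_of_nonneg_left hrad
        positivity
    _ = 2 * L * Real.sqrt A / B + 2 / B := by ring
    _ ≤ 5 * Real.sqrt T + 2 * Real.sqrt T := by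
        have h2 : 2 / (B:ℝ) ≤ 2 * Real.sqrt T := by
          have : 2 / (B:ℝ) = 2 * (1/(B:ℝ)) := by ring
          rw [this]
          linarith [hsqrtT]
        linarith [piece1]
    _ = 7 * Real.sqrt T := by ring

/-- **Lemma 9.** There is a universal constant `C` such that for all
`j ≥ 1`, `L ≥ 1`, `B ≥ 2`, and every `z_j`,
`(1/B)·Rad_B(G_{z_j}) ≤ C·√(jL²log(jLB)/B)`; consequently, in the setting `M ≤ N/2`,
`B = N − M + j + 1` (here `N = B + m`, `M = j + m + 1`),
`sup_{z_j} (1/B)·Rad_B(G_{z_j}) ≤ C·√(2jL²log(jLN/2)/N)`. -/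
theorem radG_bound :
    ∃ C : ℝ, 0 < C ∧
      (∀ (X : Type) (H : Set (X → ℝ)) (ℓ : ℝ → ℝ → ℝ) (L : ℝ) (j m B : ℕ),
        (∀ h ∈ H, ∀ x, h x ∈ Icc (0:ℝ) 1) → H.Nonempty →
        LossLip ℓ L → LossNonneg ℓ → 1 ≤ L → 1 ≤ j → 2 ≤ B →
        ∀ (xj : Fin j → X) (xt : Fin m → X) (ε0 : Bool) (εr : Fin m → Bool),
          (1 / (B : ℝ)) * radG H ℓ L xj xt ε0 εr B ≤
            C * Real.sqrt ((j : ℝ) * L ^ 2 * Real.log ((j : ℝ) * L * B) / B)) ∧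
      (∀ (X : Type) (H : Set (X → ℝ)) (ℓ : ℝ → ℝ → ℝ) (L : ℝ) (j m B : ℕ),
        (∀ h ∈ H, ∀ x, h x ∈ Icc (0:ℝ) 1) → H.Nonempty →
        LossLip ℓ L → LossNonneg ℓ → 1 ≤ L → 1 ≤ j →
        2 * (j + m + 1) ≤ B + m →
        (⨆ (xj : Fin j → X) (xt : Fin m → X) (ε0 : Bool) (εr : Fin m → Bool),
            (1 / (B : ℝ)) * radG H ℓ L xj xt ε0 εr B) ≤
          C * Real.sqrt (2 * (j : ℝ) * L ^ 2 *
            Real.log ((j : ℝ) * L * (B + m : ℕ) / 2) / ((B + m : ℕ) : ℝ))) := by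
  refine ⟨14, by norm_num, ?_, ?_⟩
  · intro X H ℓ L j m B hH hne hlip hl0 hL hj hB xj xt ε0 εr
    have h1 := part1 H ℓ L j m B hH hne hlip hl0 hL hj hB xj xt ε0 εr
    have h2 : (0:ℝ) ≤ Real.sqrt ((j : ℝ) * L ^ 2 * Real.log ((j : ℝ) * L * B) / B) :=
      Real.sqrt_nonneg _
    linarith
  · intro X H ℓ L j m B hH hne hlip hl0 hL hj hcond
    have hB : 2 ≤ B := by omega
    have hL0 : (0:ℝ) ≤ L := by linarith
    have hB0 : (0:ℝ) < B := by exact_mod_cast Nat.lt_of_lt_of_le Nat.zero_lt_two hB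
    have hj1 : (1:ℝ) ≤ j := by exact_mod_cast hj
    have hNc : ((B + m : ℕ) : ℝ) = (B:ℝ) + m := by push_cast; ring
    have hm0 : (0:ℝ) ≤ m := by positivity
    have hmB : (m:ℕ) ≤ B := by omega
    have hmBr : (m:ℝ) ≤ B := by exact_mod_cast hmB
    have hN4 : (4:ℝ) ≤ (B:ℝ) + m := by
      have : (4:ℕ) ≤ B + m := by omega
      exact_mod_cast this
    have hRHS0 : (0:ℝ) ≤ 14 * Real.sqrt (2 * (j : ℝ) * L ^ 2 *
        Real.log ((j : ℝ) * L * (B + m : ℕ) / 2) / ((B + m : ℕ) : ℝ)) := by positivity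
    refine Real.iSup_le (fun xj => Real.iSup_le (fun xt => Real.iSup_le (fun ε0 =>
      Real.iSup_le (fun εr => ?_) hRHS0) hRHS0) hRHS0) hRHS0
    have h1 := part1 H ℓ L j m B hH hne hlip hl0 hL hj hB xj xt ε0 εr
    refine h1.trans ?_
    set P : ℝ := (j : ℝ) * L * (B + m : ℕ) / 2 with hP
    have hjL1 : (1:ℝ) ≤ (j:ℝ) * L := by
      nlinarith [mul_le_mul hj1 hL (by norm_num : (0:ℝ) ≤ 1) (by linarith : (0:ℝ) ≤ (j:ℝ))]
    have hP2 : (2:ℝ) ≤ P := by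
      rw [hP, hNc]
      nlinarith [mul_le_mul hjL1 hN4 (by norm_num : (0:ℝ) ≤ 4) (by linarith : (0:ℝ) ≤ (j:ℝ) * L)]
    have hlogP : 0 < Real.log P := Real.log_pos (by linarith)
    have hB2r : (2:ℝ) ≤ (B:ℝ) := by exact_mod_cast hB
    have hjLB2 : (2:ℝ) ≤ (j:ℝ) * L * B := by
      nlinarith [mul_le_mul hjL1 hB2r (by norm_num : (0:ℝ) ≤ 2) (by linarith : (0:ℝ) ≤ (j:ℝ) * L)]
    have hlogB0 : 0 ≤ Real.log ((j:ℝ) * L * B) := (Real.log_pos (by linarith)).le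
    have hlogB_le : Real.log ((j:ℝ) * L * B) ≤ 2 * Real.log P := by
      have e1 : (j:ℝ) * L * B ≤ 2 * P := by
        rw [hP, hNc]; nlinarith
      have e2 : Real.log ((j:ℝ) * L * B) ≤ Real.log (2 * P) :=
        Real.log_le_log (by linarith) e1
      have e3 : Real.log (2 * P) = Real.log 2 + Real.log P :=
        Real.log_mul (by norm_num) (by linarith)
      have e4 : Real.log 2 ≤ Real.log P := Real.log_le_log (by norm_num) hP2
      linarith
    have hNpos : (0:ℝ) < ((B + m : ℕ) : ℝ) := by rw [hNc]; linarith
    have key : (j : ℝ) * L ^ 2 * Real.log ((j : ℝ) * L * B) / B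
        ≤ 2 * (2 * (j : ℝ) * L ^ 2 * Real.log P / ((B + m : ℕ) : ℝ)) := by
      rw [show 2 * (2 * (j : ℝ) * L ^ 2 * Real.log P / ((B + m : ℕ) : ℝ))
        = (4 * (j : ℝ) * L ^ 2 * Real.log P) / ((B + m : ℕ) : ℝ) from by ring,
        div_le_div_iff₀ hB0 hNpos]
      have hjl : (0:ℝ) ≤ (j:ℝ) * L^2 := by positivity
      have hstep : Real.log ((j:ℝ) * L * B) * ((B:ℝ) + m) ≤ 4 * Real.log P * B := by
        nlinarith [hlogP, hlogB_le, hmBr, hB0, hlogB0]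
      rw [hNc]
      nlinarith [mul_le_mul_of_nonneg_left hstep hjl]
    calc 7 * Real.sqrt ((j : ℝ) * L ^ 2 * Real.log ((j : ℝ) * L * B) / B)
        ≤ 7 * Real.sqrt (2 * (2 * (j : ℝ) * L ^ 2 * Real.log P / ((B + m : ℕ) : ℝ))) := by
          have := Real.sqrt_le_sqrt key
          linarith
      _ = 7 * (Real.sqrt 2 * Real.sqrt (2 * (j : ℝ) * L ^ 2 * Real.log P / ((B + m : ℕ) : ℝ))) := by
          rw [Real.sqrt_mul (by norm_num)]
      _ ≤ 14 * Real.sqrt (2 * (j : ℝ) * L ^ 2 * Real.log P / ((B + m : ℕ) : ℝ)) := by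
          have hs2 : Real.sqrt 2 ≤ 2 := by
            have h := Real.sqrt_le_sqrt (show (2:ℝ) ≤ 2^2 by norm_num)
            rwa [Real.sqrt_sq (by norm_num : (0:ℝ) ≤ 2)] at h
          have hs0 : (0:ℝ) ≤ Real.sqrt (2 * (j : ℝ) * L ^ 2 * Real.log P / ((B + m : ℕ) : ℝ)) :=
            Real.sqrt_nonneg _
          nlinarith
      _ = 14 * Real.sqrt (2 * (j : ℝ) * L ^ 2 *
            Real.log ((j : ℝ) * L * (B + m : ℕ) / 2) / ((B + m : ℕ) : ℝ)) := by rw [hP]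


end
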